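/- Let F_1, …, F_D be probability measures on a measurable space, and for a weight vector w let F^w = Σ_{j=1}^D w_j F_j. Suppose w^c is a weight vector with all entries strictly positive and that the mixture family is identifiable at w^c, i.e. F^w ≠ F^{w^c} for every weight vector w ≠ w^c. Then there exists a constant c > 0 such that TV(F^w, F^{w^c}) ≥ c ‖w − w^c‖_∞ for every weight vector w. -/

import Mathlib

open MeasureTheory

/-- Total variation distance between two measures, as a supremum over measurable sets. -/
noncomputable def tvDist {Ω : Type*} [MeasurableSpace Ω] (P Q : Measure Ω) : ℝ :=
  ⨆ A : {A : Set Ω // MeasurableSet A}, |(P A.1).toReal - (Q A.1).toReal|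

/-- The mixture measure `Σ_j w_j F_j`. -/
noncomputable def mixture {Ω : Type*} [MeasurableSpace Ω] {D : ℕ}
    (F : Fin D → Measure Ω) (w : Fin D → ℝ) : Measure Ω :=
  ∑ j, ENNReal.ofReal (w j) • F j

section Aux

variable {Ω : Type*} [MeasurableSpace Ω] {D : ℕ}

instance : Nonempty {A : Set Ω // MeasurableSet A} := ⟨⟨∅, MeasurableSet.empty⟩⟩

/-- The linear seminorm `v ↦ sup_A |∑ j v j F_j(A)|`. -/
noncomputable def nfun (F : Fin D → Measure Ω) (v : Fin D → ℝ) : ℝ :=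
  ⨆ A : {A : Set Ω // MeasurableSet A}, |∑ j, v j * (F j A.1).toReal|

variable {F : Fin D → Measure Ω}

lemma measIcc (hF : ∀ j, IsProbabilityMeasure (F j)) (j : Fin D) (A : Set Ω) : (F j A).toReal ∈ Set.Icc (0:ℝ) 1 := by
  haveI := hF j
  refine ⟨ENNReal.toReal_nonneg, ?_⟩
  have h := prob_le_one (μ := F j) (s := A)
  have := ENNReal.toReal_mono (by simp) h
  simpa using this

lemma term_bound (hF : ∀ j, IsProbabilityMeasure (F j)) (v : Fin D → ℝ) (A : Set Ω) :
    |∑ j, v j * (F j A).toReal| ≤ ∑ j, |v j| := by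
  calc |∑ j, v j * (F j A).toReal| ≤ ∑ j, |v j * (F j A).toReal| :=
        Finset.abs_sum_le_sum_abs _ _
    _ ≤ ∑ j, |v j| := by
        refine Finset.sum_le_sum fun j _ => ?_
        rw [abs_mul]
        have h := measIcc hF j A
        have : |(F j A).toReal| ≤ 1 := by rw [abs_of_nonneg h.1]; exact h.2
        calc |v j| * |(F j A).toReal| ≤ |v j| * 1 :=
              mul_le_mul_of_nonneg_left this (abs_nonneg _)
          _ = |v j| := mul_one _

lemma nfun_bdd (hF : ∀ j, IsProbabilityMeasure (F j)) (v : Fin D → ℝ) :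
    BddAbove (Set.range fun A : {A : Set Ω // MeasurableSet A} =>
      |∑ j, v j * (F j A.1).toReal|) := by
  refine ⟨∑ j, |v j|, ?_⟩
  rintro x ⟨A, rfl⟩
  exact term_bound hF v A.1

lemma le_nfun (hF : ∀ j, IsProbabilityMeasure (F j)) (v : Fin D → ℝ) (A : {A : Set Ω // MeasurableSet A}) :
    |∑ j, v j * (F j A.1).toReal| ≤ nfun F v :=
  le_ciSup (nfun_bdd hF v) A

lemma nfun_nonneg (hF : ∀ j, IsProbabilityMeasure (F j)) (v : Fin D → ℝ) : 0 ≤ nfun F v :=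
  le_trans (abs_nonneg _) (le_nfun hF v ⟨∅, MeasurableSet.empty⟩)

lemma mixture_ne_top (hF : ∀ j, IsProbabilityMeasure (F j)) (w : Fin D → ℝ) (A : Set Ω) : mixture F w A ≠ ⊤ := by
  rw [mixture, Measure.finset_sum_apply]
  refine (ENNReal.sum_lt_top.2 fun j _ => ?_).ne
  rw [Measure.smul_apply, smul_eq_mul]
  haveI := hF j
  exact ENNReal.mul_lt_top ENNReal.ofReal_lt_top (measure_lt_top _ _)

lemma mixture_toReal (hF : ∀ j, IsProbabilityMeasure (F j)) {w : Fin D → ℝ} (hw : ∀ j, 0 ≤ w j) (A : Set Ω) :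
    (mixture F w A).toReal = ∑ j, w j * (F j A).toReal := by
  rw [mixture, Measure.finset_sum_apply]
  rw [ENNReal.toReal_sum (fun j _ => ?_)]
  · refine Finset.sum_congr rfl fun j _ => ?_
    rw [Measure.smul_apply, smul_eq_mul, ENNReal.toReal_mul,
      ENNReal.toReal_ofReal (hw j)]
  · rw [Measure.smul_apply, smul_eq_mul]
    haveI := hF j
    exact (ENNReal.mul_lt_top ENNReal.ofReal_lt_top (measure_lt_top _ _)).ne

lemma tv_eq_nfun (hF : ∀ j, IsProbabilityMeasure (F j)) {w u : Fin D → ℝ} (hw : ∀ j, 0 ≤ w j) (hu : ∀ j, 0 ≤ u j) :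
    tvDist (mixture F w) (mixture F u) = nfun F (w - u) := by
  unfold tvDist nfun
  refine iSup_congr fun A => ?_
  rw [mixture_toReal hF hw, mixture_toReal hF hu, ← Finset.sum_sub_distrib]
  congr 1
  refine Finset.sum_congr rfl fun j _ => ?_
  simp [sub_mul]

lemma nfun_smul (t : ℝ) (v : Fin D → ℝ) : nfun F (t • v) = |t| * nfun F v := by
  unfold nfun
  rw [Real.mul_iSup_of_nonneg (abs_nonneg t)]
  refine iSup_congr fun A => ?_
  rw [← abs_mul, Finset.mul_sum]
  congr 1
  refine Finset.sum_congr rfl fun j _ => ?_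
  simp [mul_assoc]

lemma nfun_lip (hF : ∀ j, IsProbabilityMeasure (F j)) (v u : Fin D → ℝ) : nfun F v ≤ nfun F u + ∑ j, |v j - u j| := by
  refine ciSup_le fun A => ?_
  have h1 : |∑ j, v j * (F j A.1).toReal| ≤
      |∑ j, u j * (F j A.1).toReal| + |∑ j, (v j - u j) * (F j A.1).toReal| := by
    have : (∑ j, v j * (F j A.1).toReal) =
        (∑ j, u j * (F j A.1).toReal) + ∑ j, (v j - u j) * (F j A.1).toReal := by
      rw [← Finset.sum_add_distrib]
      refine Finset.sum_congr rfl fun j _ => ?_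
      ring
    rw [this]
    exact abs_add_le _ _
  refine h1.trans (add_le_add (le_nfun hF u A) ?_)
  exact term_bound hF _ A.1

lemma nfun_cont (hF : ∀ j, IsProbabilityMeasure (F j)) : Continuous (nfun F) := by
  have key : ∀ v u : Fin D → ℝ, nfun F v - nfun F u ≤ (D : ℝ) * dist v u := by
    intro v u
    have h1 := nfun_lip hF v u
    have h2 : ∑ j, |v j - u j| ≤ (D : ℝ) * dist v u := by
      have : ∀ j : Fin D, |v j - u j| ≤ dist v u := by
        intro j
        rw [dist_eq_norm]
        have := norm_le_pi_norm (v - u) j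
        simpa using this
      calc ∑ j, |v j - u j| ≤ ∑ _j : Fin D, dist v u :=
            Finset.sum_le_sum fun j _ => this j
        _ = (D : ℝ) * dist v u := by simp [Finset.sum_const, mul_comm]
    linarith
  refine LipschitzWith.continuous (K := ⟨D, Nat.cast_nonneg D⟩) ?_
  refine LipschitzWith.of_dist_le_mul ?_
  intro v u
  rw [Real.dist_eq, abs_sub_le_iff]
  constructor
  · exact key v u
  · have := key u v
    rw [dist_comm] at this
    exact this

lemma nfun_pos (hF : ∀ j, IsProbabilityMeasure (F j)) {wc : Fin D → ℝ} (hwc : ∀ j, 0 < wc j) (hwc1 : ∑ j, wc j = 1)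
    (hident : ∀ w : Fin D → ℝ, (∀ j, 0 ≤ w j) → ∑ j, w j = 1 → w ≠ wc →
      mixture F w ≠ mixture F wc)
    {v : Fin D → ℝ} (hv : v ≠ 0) (hvs : ∑ j, v j = 0) : 0 < nfun F v := by
  have hD : 0 < D := by
    rcases Nat.eq_zero_or_pos D with h | h
    · exfalso; apply hv; subst h; funext j; exact absurd j.2 (Nat.not_lt_zero _)
    · exact h
  haveI : Nonempty (Fin D) := ⟨⟨0, hD⟩⟩
  obtain ⟨j0, -, hj0⟩ := Finset.exists_min_image Finset.univ wc ⟨Classical.arbitrary _, Finset.mem_univ _⟩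
  set m := wc j0 with hm
  have hm0 : 0 < m := hwc j0
  have hvnorm : 0 < ‖v‖ := norm_pos_iff.mpr hv
  set ε := m / ‖v‖ with hε
  have hε0 : 0 < ε := div_pos hm0 hvnorm
  set w := wc + ε • v with hwdef
  have hwpos : ∀ j, 0 ≤ w j := by
    intro j
    have h1 : |v j| ≤ ‖v‖ := by
      have := norm_le_pi_norm v j; simpa using this
    have h2 : ε * |v j| ≤ m := by
      rw [hε, div_mul_eq_mul_div, div_le_iff₀ hvnorm]
      exact mul_le_mul_of_nonneg_left h1 hm0.le
    have h3 : -(ε * v j) ≤ m := by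
      have : -(ε * v j) ≤ ε * |v j| := by
        calc -(ε * v j) ≤ |ε * v j| := neg_le_abs _
          _ = ε * |v j| := by rw [abs_mul, abs_of_nonneg hε0.le]
      linarith
    have h4 : m ≤ wc j := hj0 j (Finset.mem_univ j)
    have : w j = wc j + ε * v j := rfl
    linarith
  have hwsum : ∑ j, w j = 1 := by
    have h0 : ∑ j, w j = ∑ j, (wc j + ε * v j) := rfl
    rw [h0, Finset.sum_add_distrib, ← Finset.mul_sum, hvs, hwc1]; ring
  have hwne : w ≠ wc := by
    intro h
    apply hv
    have : ε • v = 0 := by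
      have := congrArg (fun x => x - wc) h
      simpa [hwdef] using this
    have := smul_eq_zero.mp this
    rcases this with h | h
    · exact absurd h hε0.ne'
    · exact h
  have hmix := hident w hwpos hwsum hwne
  have : ∃ A : Set Ω, MeasurableSet A ∧ mixture F w A ≠ mixture F wc A := by
    by_contra h
    push_neg at h
    exact hmix (Measure.ext fun A hA => h A hA)
  obtain ⟨A, hA, hAne⟩ := this
  have hne : (mixture F w A).toReal ≠ (mixture F wc A).toReal := by
    intro h
    exact hAne ((ENNReal.toReal_eq_toReal_iff' (mixture_ne_top hF w A)
      (mixture_ne_top hF wc A)).mp h)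
  have hsub : (mixture F w A).toReal - (mixture F wc A).toReal =
      ∑ j, (ε • v) j * (F j A).toReal := by
    rw [mixture_toReal hF hwpos, mixture_toReal hF (fun j => (hwc j).le),
      ← Finset.sum_sub_distrib]
    refine Finset.sum_congr rfl fun j _ => ?_
    have : w j - wc j = (ε • v) j := by simp [hwdef]
    rw [← sub_mul, this]
  have hpos : 0 < nfun F (ε • v) := by
    have h1 : 0 < |∑ j, (ε • v) j * (F j A).toReal| := by
      rw [← hsub, abs_pos]
      exact sub_ne_zero.mpr hne
    exact lt_of_lt_of_le h1 (le_nfun hF _ ⟨A, hA⟩)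
  rw [nfun_smul ε v, abs_of_nonneg hε0.le] at hpos
  by_contra h
  push_neg at h
  have : nfun F v = 0 := le_antisymm h (nfun_nonneg hF v)
  rw [this, mul_zero] at hpos
  exact lt_irrefl 0 hpos

end Aux

/-- If the mixture family is identifiable at an interior weight vector `w^c`, then the
total variation distance to `F^{w^c}` is bounded below by a positive multiple of the
sup-norm distance of the weights. -/
theorem stmt_18
    {Ω : Type*} [MeasurableSpace Ω]
    {D : ℕ} (F : Fin D → Measure Ω) (hF : ∀ j, IsProbabilityMeasure (F j))
    (wc : Fin D → ℝ) (hwc : ∀ j, 0 < wc j) (hwc1 : ∑ j, wc j = 1)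
    (hident : ∀ w : Fin D → ℝ, (∀ j, 0 ≤ w j) → ∑ j, w j = 1 → w ≠ wc →
      mixture F w ≠ mixture F wc) :
    ∃ c : ℝ, 0 < c ∧ ∀ w : Fin D → ℝ, (∀ j, 0 ≤ w j) → ∑ j, w j = 1 →
      c * ‖w - wc‖ ≤ tvDist (mixture F w) (mixture F wc) := by
  classical
  set K : Set (Fin D → ℝ) := {v | (∑ j, v j = 0) ∧ ‖v‖ = 1} with hK
  by_cases hKn : K.Nonempty
  · have hKclosed : IsClosed K := by
      have h1 : IsClosed {v : Fin D → ℝ | ∑ j, v j = 0} :=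
        isClosed_eq (continuous_finset_sum _ fun j _ => continuous_apply j) continuous_const
      have h2 : IsClosed {v : Fin D → ℝ | ‖v‖ = 1} :=
        isClosed_eq continuous_norm continuous_const
      exact h1.inter h2
    have hKbdd : Bornology.IsBounded K := by
      refine (Metric.isBounded_iff_subset_closedBall 0).mpr ⟨1, fun v hv => ?_⟩
      simp only [Metric.mem_closedBall, dist_zero_right]
      exact hv.2.le
    have hKcomp : IsCompact K := Metric.isCompact_of_isClosed_isBounded hKclosed hKbdd
    obtain ⟨v0, hv0K, hmin⟩ := hKcomp.exists_isMinOn hKn (nfun_cont hF).continuousOn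
    have hv0ne : v0 ≠ 0 := fun h => by
      have := hv0K.2
      rw [h] at this
      simp at this
    have hc : 0 < nfun F v0 := nfun_pos hF hwc hwc1 hident hv0ne hv0K.1
    refine ⟨nfun F v0, hc, fun w hw hw1 => ?_⟩
    rw [tv_eq_nfun hF hw (fun j => (hwc j).le)]
    set v := w - wc with hv
    have hvs : ∑ j, v j = 0 := by
      have : ∑ j, v j = ∑ j, w j - ∑ j, wc j := by
        rw [← Finset.sum_sub_distrib]; rfl
      rw [this, hw1, hwc1]; ring
    by_cases hv0 : v = 0
    · rw [hv0]
      simp only [norm_zero, mul_zero]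
      exact nfun_nonneg hF 0
    · have hvnorm : 0 < ‖v‖ := norm_pos_iff.mpr hv0
      have huK : (‖v‖⁻¹ • v) ∈ K := by
        constructor
        · have : ∑ j, (‖v‖⁻¹ • v) j = ‖v‖⁻¹ * ∑ j, v j := by
            rw [Finset.mul_sum]; rfl
          rw [this, hvs, mul_zero]
        · rw [norm_smul, norm_inv, norm_norm, inv_mul_cancel₀ hvnorm.ne']
      have h1 : nfun F v0 ≤ nfun F (‖v‖⁻¹ • v) := hmin huK
      have h2 : nfun F (‖v‖⁻¹ • v) = ‖v‖⁻¹ * nfun F v := by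
        rw [nfun_smul, abs_of_nonneg (inv_nonneg.mpr hvnorm.le)]
      rw [h2] at h1
      calc nfun F v0 * ‖v‖ ≤ (‖v‖⁻¹ * nfun F v) * ‖v‖ :=
            mul_le_mul_of_nonneg_right h1 hvnorm.le
        _ = nfun F v := by field_simp
  · refine ⟨1, one_pos, fun w hw hw1 => ?_⟩
    have hveq : w - wc = 0 := by
      by_contra h
      have hvnorm : 0 < ‖w - wc‖ := norm_pos_iff.mpr h
      apply hKn
      refine ⟨‖w - wc‖⁻¹ • (w - wc), ?_, ?_⟩
      · have hvs : ∑ j, (w - wc) j = 0 := by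
          have : ∑ j, (w - wc) j = ∑ j, w j - ∑ j, wc j := by
            rw [← Finset.sum_sub_distrib]; rfl
          rw [this, hw1, hwc1]; ring
        have : ∑ j, (‖w - wc‖⁻¹ • (w - wc)) j = ‖w - wc‖⁻¹ * ∑ j, (w - wc) j := by
          rw [Finset.mul_sum]; rfl
        rw [this, hvs, mul_zero]
      · rw [norm_smul, norm_inv, norm_norm, inv_mul_cancel₀ hvnorm.ne']
    rw [tv_eq_nfun hF hw (fun j => (hwc j).le), hveq]
    simp only [norm_zero, mul_zero, one_mul]
    have := nfun_nonneg hF (0 : Fin D → ℝ)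
    simpa using this
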